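/- Define z_n = ((d_{4n}+1)/4 − n) mod 2, where d_n is the n-th positive integer m with c_m = 0. Then z_n = 1 if and only if n can be written as n = Σ_{i=0}^{s} 2^{n_i − 1}(2^{n_i} − 1) for some strictly increasing sequence of integers 1 < n_0 < n_1 < … < n_s (the empty sum n = 0 included). -/

import Mathlib

namespace ZProof

def yk : ℕ → ℕ
  | 0 => 0
  | k+1 => 4 * yk ((k+1)/2) + (k+1) % 2
  decreasing_by exact Nat.div_lt_self (Nat.succ_pos k) one_lt_two

lemma yk_zero : yk 0 = 0 := by simp [yk]

lemma yk_succ (n : ℕ) : yk (n+1) = 4 * yk ((n+1)/2) + (n+1) % 2 := by rw [yk]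

lemma yk_two_mul (a : ℕ) : yk (2*a) = 4 * yk a := by
  cases a with
  | zero => norm_num [yk_zero]
  | succ b =>
    have h : 2*(b+1) = (2*b+1)+1 := by ring
    rw [h, yk_succ]
    have h1 : (2*b+1+1)/2 = b+1 := by omega
    have h2 : (2*b+1+1) % 2 = 0 := by omega
    rw [h1, h2]
    omega

lemma yk_two_mul_add_one (a : ℕ) : yk (2*a+1) = 4 * yk a + 1 := by
  rw [yk_succ]
  have h1 : (2*a+1)/2 = a := by omega
  have h2 : (2*a+1) % 2 = 1 := by omega
  rw [h1, h2]

lemma yk_lt_succ : ∀ k, yk k < yk (k+1) := by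
  intro k
  induction k using Nat.strong_induction_on with
  | _ k IH =>
    rcases Nat.even_or_odd k with ⟨a, ha⟩ | ⟨a, ha⟩
    · subst ha
      have h : a + a = 2*a := by ring
      rw [h, yk_two_mul, yk_two_mul_add_one]
      omega
    · subst ha
      have h : 2*a+1+1 = 2*(a+1) := by ring
      rw [h, yk_two_mul, yk_two_mul_add_one]
      have := IH a (by omega)
      omega

lemma yk_mono : StrictMono yk := strictMono_nat_of_lt_succ yk_lt_succ

lemma le_yk (k : ℕ) : k ≤ yk k := yk_mono.le_apply

lemma yk_pos {k : ℕ} (hk : k ≠ 0) : 1 ≤ yk k := by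
  have : yk 1 ≤ yk k := yk_mono.monotone (by omega)
  have h1 : yk 1 = 1 := by rw [show (1:ℕ) = 2*0+1 from rfl, yk_two_mul_add_one, yk_zero]
  omega

lemma yk_gap : ∀ (d a : ℕ), yk a + d ≤ yk (a + d) := by
  intro d
  induction d with
  | zero => simp
  | succ e ih =>
    intro a
    have h1 := ih a
    have h2 := yk_lt_succ (a + e)
    rw [show a + (e+1) = (a+e)+1 from by ring]
    omega

lemma yk_mod4 : ∀ k, yk k % 4 = k % 2 := by
  intro k
  rcases Nat.even_or_odd k with ⟨a, ha⟩ | ⟨a, ha⟩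
  · subst ha; rw [show a+a = 2*a from by ring, yk_two_mul]; omega
  · subst ha; rw [yk_two_mul_add_one]; omega

def Good (y : ℕ) : Prop := ∃ k, k ≠ 0 ∧ yk k = y

instance : DecidablePred Good := fun y => by
  haveI : Decidable (∃ k ∈ Finset.range (y+1), k ≠ 0 ∧ yk k = y) := Finset.decidableExistsAndFinset
  exact
  decidable_of_iff (∃ k ∈ Finset.range (y+1), k ≠ 0 ∧ yk k = y) (by
    constructor
    · rintro ⟨k, _, hk⟩; exact ⟨k, hk⟩
    · rintro ⟨k, hk0, hke⟩
      refine ⟨k, Finset.mem_range.mpr ?_, hk0, hke⟩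
      have := le_yk k; omega)

lemma not_good_zero : ¬ Good 0 := by
  rintro ⟨k, hk0, hke⟩
  have := yk_pos hk0; omega

lemma good_one : Good 1 :=
  ⟨1, one_ne_zero, by rw [show (1:ℕ) = 2*0+1 from rfl, yk_two_mul_add_one, yk_zero]⟩

lemma not_good_two_mod4 (j : ℕ) : ¬ Good (4*j+2) := by
  rintro ⟨k, _, hke⟩
  have := yk_mod4 k
  omega

lemma not_good_three_mod4 (j : ℕ) : ¬ Good (4*j+3) := by
  rintro ⟨k, _, hke⟩
  have := yk_mod4 k
  omega

lemma not_good_two : ¬ Good 2 := by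
  have := not_good_two_mod4 0; simpa using this

lemma good_four_mul (j : ℕ) : Good (4*j) ↔ Good j := by
  constructor
  · rintro ⟨k, hk0, hke⟩
    have hm := yk_mod4 k
    have hk2 : k % 2 = 0 := by omega
    obtain ⟨a, rfl⟩ : ∃ a, k = 2*a := ⟨k/2, by omega⟩
    rw [yk_two_mul] at hke
    exact ⟨a, by omega, by omega⟩
  · rintro ⟨k, hk0, hke⟩
    exact ⟨2*k, by omega, by rw [yk_two_mul]; omega⟩

lemma good_four_mul_add_one (j : ℕ) : Good (4*j+1) ↔ (j = 0 ∨ Good j) := by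
  constructor
  · rintro ⟨k, hk0, hke⟩
    have hm := yk_mod4 k
    have hk2 : k % 2 = 1 := by omega
    obtain ⟨a, rfl⟩ : ∃ a, k = 2*a+1 := ⟨k/2, by omega⟩
    rw [yk_two_mul_add_one] at hke
    rcases Nat.eq_zero_or_pos a with rfl | ha
    · left; rw [yk_zero] at hke; omega
    · right; exact ⟨a, by omega, by omega⟩
  · rintro (rfl | ⟨k, hk0, hke⟩)
    · simpa using good_one
    · exact ⟨2*k+1, by omega, by rw [yk_two_mul_add_one]; omega⟩

lemma good_succ_iff (n : ℕ) (hn : 1 ≤ n) : Good (2*n+1) ↔ Good (2*n) := by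
  rcases Nat.even_or_odd n with ⟨j, hj⟩ | ⟨j, hj⟩
  · have hj2 : n = 2*j := by omega
    subst hj2
    rw [show 2*(2*j)+1 = 4*j+1 from by ring, show 2*(2*j) = 4*j from by ring,
      good_four_mul_add_one, good_four_mul]
    have : j ≠ 0 := by omega
    tauto
  · subst hj
    rw [show 2*(2*j+1)+1 = 4*j+3 from by ring, show 2*(2*j+1) = 4*j+2 from by ring]
    have := not_good_three_mod4 j
    have := not_good_two_mod4 j
    tauto

end ZProof
namespace ZProof

lemma GB (n : ℕ) (hn : 1 ≤ n) :
    ((if Good (2*n) then (1:ZMod 2) else 0) + (if Good ((n+1)/2) then (1:ZMod 2) else 0))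
      = if Good (2*n+2) then (1:ZMod 2) else 0 := by
  rcases Nat.even_or_odd n with ⟨j, hj⟩ | ⟨j, hj⟩
  · have hj2 : n = 2*j := by omega
    subst hj2
    rw [show 2*(2*j) = 4*j from by ring, show (2*j+1)/2 = j from by omega,
      if_neg (not_good_two_mod4 j)]
    by_cases hG : Good j
    · rw [if_pos ((good_four_mul j).mpr hG), if_pos hG]; decide
    · rw [if_neg (fun h => hG ((good_four_mul j).mp h)), if_neg hG]; decide
  · subst hj
    rw [show 2*(2*j+1) = 4*j+2 from by ring, show (2*j+1+1)/2 = j+1 from by omega,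
      show 4*j+2+2 = 4*(j+1) from by ring, if_neg (not_good_two_mod4 j), zero_add]
    exact if_congr (Iff.symm (good_four_mul (j+1))) rfl rfl

theorem cForm (c : ℕ → ZMod 2) (hc0 : c 0 = 0) (hc1 : c 1 = 1) (hc2 : c 2 = 1) (hc3 : c 3 = 0)
    (h40 : ∀ n : ℕ, 1 ≤ n → c (4 * n) = c (4 * n - 1))
    (h41 : ∀ n : ℕ, 1 ≤ n → c (4 * n + 1) = c (4 * n - 1))
    (h42 : ∀ n : ℕ, 1 ≤ n → c (4 * n + 2) = c (4 * n - 1))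
    (h43 : ∀ n : ℕ, 1 ≤ n → c (4 * n + 3) = c (4 * n - 1) + c n) :
    ∀ m, c m = if Good ((m+1)/2) then 1 else 0 := by
  intro m
  induction m using Nat.strong_induction_on with
  | _ m IH =>
    by_cases hm4 : m < 4
    · interval_cases m
      · rw [hc0, show (0+1)/2 = 0 from rfl, if_neg not_good_zero]
      · rw [hc1, show (1+1)/2 = 1 from rfl, if_pos good_one]
      · rw [hc2, show (2+1)/2 = 1 from rfl, if_pos good_one]
      · rw [hc3, show (3+1)/2 = 2 from rfl, if_neg not_good_two]
    · have hn : 1 ≤ m / 4 := by omega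
      set n := m / 4 with hns
      have hm : m = 4 * n + m % 4 := by omega
      have hr : m % 4 = 0 ∨ m % 4 = 1 ∨ m % 4 = 2 ∨ m % 4 = 3 := by omega
      have IH3 : c (4*n-1) = if Good ((4*n-1+1)/2) then 1 else 0 := IH (4*n-1) (by omega)
      have e3 : (4*n-1+1)/2 = 2*n := by omega
      rcases hr with h | h | h | h
      · rw [show m = 4*n from by omega, h40 n hn, IH3, e3, show (4*n+1)/2 = 2*n from by omega]
      · rw [show m = 4*n+1 from by omega, h41 n hn, IH3, e3,
          show (4*n+1+1)/2 = 2*n+1 from by omega]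
        exact if_congr (Iff.symm (good_succ_iff n hn)) rfl rfl
      · rw [show m = 4*n+2 from by omega, h42 n hn, IH3, e3,
          show (4*n+2+1)/2 = 2*n+1 from by omega]
        exact if_congr (Iff.symm (good_succ_iff n hn)) rfl rfl
      · rw [show m = 4*n+3 from by omega, h43 n hn, IH3, e3, IH n (by omega),
          show (4*n+3+1)/2 = 2*n+2 from by omega]
        exact GB n hn

lemma icc_insert (a b : ℕ) (h : a ≤ b+1) :
    Finset.Icc a (b+1) = insert (b+1) (Finset.Icc a b) := by
  ext x; simp only [Finset.mem_Icc, Finset.mem_insert]; omega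

lemma cnt (M : ℕ) : ((Finset.Icc 1 (2*M)).filter (fun m => Good ((m+1)/2))).card
    = 2 * ((Finset.Icc 1 M).filter Good).card := by
  induction M with
  | zero =>
    rw [show 2*0 = 0 from rfl, Finset.Icc_eq_empty (by omega)]
    simp
  | succ M ih =>
    rw [show 2*(M+1) = (2*M+1)+1 from by ring, icc_insert 1 (2*M+1) (by omega),
      icc_insert 1 (2*M) (by omega), icc_insert 1 M (by omega),
      Finset.filter_insert, Finset.filter_insert, Finset.filter_insert]
    rw [show (2*M+1+1+1)/2 = M+1 from by omega, show (2*M+1+1)/2 = M+1 from by omega]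
    have h2 : (2*M+1) ∉ (Finset.Icc 1 (2*M)).filter (fun m => Good ((m+1)/2)) := by
      intro h
      have := (Finset.mem_filter.mp h).1
      simp only [Finset.mem_Icc] at this
      omega
    have h3 : (M+1) ∉ (Finset.Icc 1 M).filter Good := by
      intro h
      have := (Finset.mem_filter.mp h).1
      simp only [Finset.mem_Icc] at this
      omega
    by_cases hG : Good (M+1)
    · rw [if_pos hG, if_pos hG, if_pos hG]
      have h1 : (2*M+1+1) ∉ insert (2*M+1)
          ((Finset.Icc 1 (2*M)).filter (fun m => Good ((m+1)/2))) := by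
        intro h
        rcases Finset.mem_insert.mp h with h | h
        · omega
        · have := (Finset.mem_filter.mp h).1
          simp only [Finset.mem_Icc] at this
          omega
      rw [Finset.card_insert_of_notMem h1, Finset.card_insert_of_notMem h2,
        Finset.card_insert_of_notMem h3]
      omega
    · rw [if_neg hG, if_neg hG, if_neg hG]
      exact ih

lemma glab (K M : ℕ) (h1 : yk K ≤ M) (h2 : M < yk (K+1)) :
    ((Finset.Icc 1 M).filter Good).card = K := by
  have himg : (Finset.Icc 1 M).filter Good = (Finset.Icc 1 K).image yk := by
    ext y
    simp only [Finset.mem_filter, Finset.mem_Icc, Finset.mem_image]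
    constructor
    · rintro ⟨⟨hy1, hy2⟩, k, hk0, rfl⟩
      refine ⟨k, ⟨by omega, ?_⟩, rfl⟩
      by_contra hkK
      have : yk (K+1) ≤ yk k := yk_mono.monotone (by omega)
      omega
    · rintro ⟨k, ⟨hk1, hk2⟩, rfl⟩
      have ha : yk k ≤ yk K := yk_mono.monotone hk2
      have hb : 1 ≤ yk k := yk_pos (by omega)
      exact ⟨⟨hb, by omega⟩, k, by omega, rfl⟩
  rw [himg, Finset.card_image_of_injective _ yk_mono.injective, Nat.card_Icc]
  omega

end ZProof
namespace ZProof

lemma sum_image_succ_pow (b : ℕ) (S : Finset ℕ) (hS : ∀ m ∈ S, 1 ≤ m) :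
    (∑ m ∈ S.image (· + 1), b^(m-1)) = b * ∑ m ∈ S, b^(m-1) := by
  rw [Finset.sum_image (by intro x _ y _ h; simp only at h; omega), Finset.mul_sum]
  refine Finset.sum_congr rfl (fun x hx => ?_)
  have hx1 := hS x hx
  rw [show x + 1 - 1 = (x-1) + 1 from by omega, pow_succ]
  ring

lemma mem_image_succ (S : Finset ℕ) : ∀ m ∈ S.image (· + 1), 1 ≤ m := by
  intro m hm
  obtain ⟨x, hx, rfl⟩ := Finset.mem_image.mp hm
  omega

lemma L1 : ∀ k, ∃ S : Finset ℕ, (∀ m ∈ S, 1 ≤ m) ∧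
    (∑ m ∈ S, 2^(m-1)) = k ∧ (∑ m ∈ S, 4^(m-1)) = yk k := by
  intro k
  induction k using Nat.strong_induction_on with
  | _ k IH =>
    rcases Nat.eq_zero_or_pos k with rfl | hk
    · exact ⟨∅, by simp, by simp, by simp [yk_zero]⟩
    · obtain ⟨S, hS1, hS2, hS3⟩ := IH (k/2) (by omega)
      have him2 := sum_image_succ_pow 2 S hS1
      have him4 := sum_image_succ_pow 4 S hS1
      rcases Nat.even_or_odd k with ⟨a, ha⟩ | ⟨a, ha⟩
      · have hyk := yk_two_mul (k/2)
        rw [show 2*(k/2) = k from by omega] at hyk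
        exact ⟨S.image (·+1), mem_image_succ S,
          by rw [him2, hS2]; omega, by rw [him4, hS3]; omega⟩
      · have hyk := yk_two_mul_add_one (k/2)
        rw [show 2*(k/2)+1 = k from by omega] at hyk
        have h1 : 1 ∉ S.image (·+1) := by
          intro h
          obtain ⟨x, hx, hx1⟩ := Finset.mem_image.mp h
          have := hS1 x hx
          omega
        refine ⟨insert 1 (S.image (·+1)), ?_, ?_, ?_⟩
        · intro m hm
          rcases Finset.mem_insert.mp hm with rfl | hm'
          · omega
          · exact mem_image_succ S _ hm'
        · rw [Finset.sum_insert h1, him2, hS2]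
          norm_num
          omega
        · rw [Finset.sum_insert h1, him4, hS3]
          norm_num
          omega

lemma L1e (a : ℕ) : ∃ S : Finset ℕ, (∀ m ∈ S, 2 ≤ m) ∧
    (∑ m ∈ S, 2^(m-1)) = 2*a ∧ (∑ m ∈ S, 4^(m-1)) = yk (2*a) := by
  obtain ⟨S, hS1, hS2, hS3⟩ := L1 a
  have him2 := sum_image_succ_pow 2 S hS1
  have him4 := sum_image_succ_pow 4 S hS1
  have hyk := yk_two_mul a
  refine ⟨S.image (·+1), ?_, by rw [him2, hS2], by rw [him4, hS3]; omega⟩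
  intro m hm
  obtain ⟨x, hx, rfl⟩ := Finset.mem_image.mp hm
  have := hS1 x hx
  omega

lemma sum_image_pred_pow (b : ℕ) (S₁ : Finset ℕ) (h2 : ∀ m ∈ S₁, 2 ≤ m) :
    (∑ m ∈ S₁.image (· - 1), b^(m-1)) * b = ∑ m ∈ S₁, b^(m-1) := by
  rw [Finset.sum_image (by intro x hx y hy h; have := h2 x hx; have := h2 y hy; simp only at h; omega),
    Finset.sum_mul]
  refine Finset.sum_congr rfl (fun x hx => ?_)
  have := h2 x hx
  rw [show x - 1 - 1 = x - 2 from by omega, show x - 1 = (x-2)+1 from by omega, pow_succ]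

lemma L2 : ∀ k (S : Finset ℕ), (∀ m ∈ S, 1 ≤ m) → (∑ m ∈ S, 2^(m-1)) = k →
    (∑ m ∈ S, 4^(m-1)) = yk k := by
  intro k
  induction k using Nat.strong_induction_on with
  | _ k IH =>
    intro S hS1 hS2
    rcases Nat.eq_zero_or_pos k with rfl | hk
    · rcases Finset.eq_empty_or_nonempty S with rfl | ⟨m, hm⟩
      · simp [yk_zero]
      · exfalso
        have h1 : 2^(m-1) ≤ ∑ m ∈ S, 2^(m-1) :=
          Finset.single_le_sum (f := fun m => 2^(m-1)) (fun i _ => Nat.zero_le _) hm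
        have h2 : 0 < 2^(m-1) := pow_pos (by norm_num) _
        omega
    · have h2S₁ : ∀ m ∈ S.erase 1, 2 ≤ m := by
        intro m hm
        have h := Finset.mem_erase.mp hm
        have := hS1 m h.2
        omega
      have hS₂1 : ∀ m ∈ (S.erase 1).image (· - 1), 1 ≤ m := by
        intro m hm
        obtain ⟨x, hx, rfl⟩ := Finset.mem_image.mp hm
        have := h2S₁ x hx
        omega
      have hsum2 := sum_image_pred_pow 2 (S.erase 1) h2S₁
      have hsum4 := sum_image_pred_pow 4 (S.erase 1) h2S₁
      have hIH := fun (hlt : (∑ m ∈ (S.erase 1).image (· - 1), 2^(m-1)) < k) =>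
        IH _ hlt ((S.erase 1).image (· - 1)) hS₂1 rfl
      by_cases h1 : 1 ∈ S
      · have hsplit2 : (∑ m ∈ S.erase 1, 2^(m-1)) + 2^(1-1) = ∑ m ∈ S, 2^(m-1) :=
          Finset.sum_erase_add S _ h1
        have hsplit4 : (∑ m ∈ S.erase 1, 4^(m-1)) + 4^(1-1) = ∑ m ∈ S, 4^(m-1) :=
          Finset.sum_erase_add S _ h1
        norm_num at hsplit2 hsplit4
        have hka : k = 2*(∑ m ∈ (S.erase 1).image (· - 1), 2^(m-1)) + 1 := by omega
        have hy := hIH (by omega)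
        have hyk := yk_two_mul_add_one (∑ m ∈ (S.erase 1).image (· - 1), 2^(m-1))
        rw [show 2*(∑ m ∈ (S.erase 1).image (· - 1), 2^(m-1))+1 = k from hka.symm] at hyk
        omega
      · have hS₁S : S.erase 1 = S := Finset.erase_eq_of_notMem h1
        have heq2 : (∑ m ∈ S.erase 1, 2^(m-1)) = ∑ m ∈ S, 2^(m-1) := by rw [hS₁S]
        have heq4 : (∑ m ∈ S.erase 1, 4^(m-1)) = ∑ m ∈ S, 4^(m-1) := by rw [hS₁S]
        have hka : k = 2*(∑ m ∈ (S.erase 1).image (· - 1), 2^(m-1)) := by omega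
        have hy := hIH (by omega)
        have hyk := yk_two_mul (∑ m ∈ (S.erase 1).image (· - 1), 2^(m-1))
        rw [show 2*(∑ m ∈ (S.erase 1).image (· - 1), 2^(m-1)) = k from hka.symm] at hyk
        omega

end ZProof

/-- Let `d` enumerate `{m ≥ 1 : c_m = 0}` in increasing order (`d 0` being the
least element) and `zₙ = ((d_{4n} + 1)/4 − n) mod 2`. Then `zₙ = 1` iff
`n = ∑_{m ∈ S} 2^{m−1}(2^m − 1)` for some finite set `S` of integers `> 1`
(the empty sum `n = 0` included). -/
theorem z_eq_one_iff (c : ℕ → ZMod 2) (hc0 : c 0 = 0) (hc1 : c 1 = 1) (hc2 : c 2 = 1) (hc3 : c 3 = 0)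
    (h40 : ∀ n : ℕ, 1 ≤ n → c (4 * n) = c (4 * n - 1))
    (h41 : ∀ n : ℕ, 1 ≤ n → c (4 * n + 1) = c (4 * n - 1))
    (h42 : ∀ n : ℕ, 1 ≤ n → c (4 * n + 2) = c (4 * n - 1))
    (h43 : ∀ n : ℕ, 1 ≤ n → c (4 * n + 3) = c (4 * n - 1) + c n)
    (d : ℕ → ℕ) (hd : ∀ n : ℕ, d n = Nat.nth (fun m => 1 ≤ m ∧ c m = 0) n)
    (z : ℕ → ℕ) (hz : ∀ n : ℕ, z n = ((d (4 * n) + 1) / 4 - n) % 2) :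
    ∀ n : ℕ, z n = 1 ↔
      ∃ S : Finset ℕ, (∀ m ∈ S, 1 < m) ∧
        n = ∑ m ∈ S, 2 ^ (m - 1) * (2 ^ m - 1) := by
  intro n
  set p : ℕ → Prop := fun m => 1 ≤ m ∧ c m = 0 with hp
  haveI : DecidablePred p := fun m => decidable_of_iff (1 ≤ m ∧ c m = 0) Iff.rfl
  have hcf := ZProof.cForm c hc0 hc1 hc2 hc3 h40 h41 h42 h43
  have hcz : ∀ m, (c m = 0 ↔ ¬ ZProof.Good ((m+1)/2)) := by
    intro m
    rw [hcf m]
    by_cases h : ZProof.Good ((m+1)/2) <;> simp [h]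
  set P : ℕ → Prop := fun j => 2 * ZProof.yk j ≤ n + j with hP
  haveI : DecidablePred P := fun j => decidable_of_iff (2 * ZProof.yk j ≤ n + j) Iff.rfl
  set k := Nat.findGreatest P n with hkdef
  have hP0 : P 0 := by show 2 * ZProof.yk 0 ≤ n + 0; rw [ZProof.yk_zero]; omega
  have hk1 : 2 * ZProof.yk k ≤ n + k := Nat.findGreatest_spec (Nat.zero_le n) hP0
  have hk2 : ∀ j, k < j → ¬ (2 * ZProof.yk j ≤ n + j) := by
    intro j hj hle
    by_cases hjn : j ≤ n
    · exact Nat.findGreatest_is_greatest hj hjn hle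
    · have := ZProof.le_yk j
      omega
  have hq2 : n + k + 2 ≤ 2 * ZProof.yk (k+1) := by
    have := hk2 (k+1) (by omega)
    omega
  have hGcard : ((Finset.Icc 1 (2*(n+k)+1)).filter ZProof.Good).card = 2*k+1 := by
    apply ZProof.glab
    · rw [ZProof.yk_two_mul_add_one]; omega
    · rw [show 2*k+1+1 = 2*(k+1) from by ring, ZProof.yk_two_mul]; omega
  have hcount : Nat.count p (4*(n+k)+3) = 4*n := by
    rw [Nat.count_eq_card_filter_range]
    have hfe : (Finset.range (4*(n+k)+3)).filter p
        = (Finset.Icc 1 (2*(2*(n+k)+1))).filter (fun m => ¬ ZProof.Good ((m+1)/2)) := by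
      ext m
      simp only [Finset.mem_filter, Finset.mem_range, Finset.mem_Icc, hp]
      constructor
      · rintro ⟨hlt, h1m, hc⟩
        exact ⟨⟨h1m, by omega⟩, (hcz m).mp hc⟩
      · rintro ⟨⟨h1m, hle⟩, hg⟩
        exact ⟨by omega, h1m, (hcz m).mpr hg⟩
    rw [hfe]
    have hsplit := Finset.card_filter_add_card_filter_not
      (s := Finset.Icc 1 (2*(2*(n+k)+1))) (p := fun m => ZProof.Good ((m+1)/2))
    have hpos := ZProof.cnt (2*(n+k)+1)
    rw [hGcard] at hpos
    have hcard : (Finset.Icc 1 (2*(2*(n+k)+1))).card = 2*(2*(n+k)+1) := by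
      rw [Nat.card_Icc]; omega
    omega
  have hpq : p (4*(n+k)+3) := by
    refine ⟨by omega, (hcz _).mpr ?_⟩
    rw [show (4*(n+k)+3+1)/2 = 2*(n+k)+2 from by omega]
    rintro ⟨k', hk'0, hke⟩
    have hm4 := ZProof.yk_mod4 k'
    have hk'2 : k' % 2 = 0 := by omega
    obtain ⟨a, rfl⟩ : ∃ a, k' = 2*a := ⟨k'/2, by omega⟩
    rw [ZProof.yk_two_mul] at hke
    have hlow : ZProof.yk k < ZProof.yk a := by omega
    have hhigh : ZProof.yk a < ZProof.yk (k+1) := by omega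
    have h5 := ZProof.yk_mono.lt_iff_lt.mp hlow
    have h6 := ZProof.yk_mono.lt_iff_lt.mp hhigh
    omega
  have hd4 : d (4*n) = 4*(n+k)+3 := by
    rw [hd]
    have hnc := Nat.nth_count (p := p) hpq
    rw [hcount] at hnc
    exact hnc
  have hzn : z n = (k+1) % 2 := by
    rw [hz, hd4, show (4*(n+k)+3+1)/4 = n+k+1 from by omega,
      show n+k+1-n = k+1 from by omega]
  have hterm : ∀ m, 1 ≤ m → 2^(m-1)*(2^m - 1) + 2^(m-1) = 2*4^(m-1) := by
    intro m hm
    obtain ⟨i, rfl⟩ : ∃ i, m = i+1 := ⟨m-1, by omega⟩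
    simp only [Nat.add_sub_cancel]
    have h2 : 1 ≤ 2^(i+1) := Nat.one_le_two_pow
    have h4 : (4:ℕ)^i = 2^i * 2^i := by
      rw [show (4:ℕ) = 2*2 from rfl, mul_pow]
    calc 2^i*(2^(i+1) - 1) + 2^i = 2^i * ((2^(i+1) - 1) + 1) := by ring
      _ = 2^i * 2^(i+1) := by rw [Nat.sub_add_cancel h2]
      _ = 2*4^i := by rw [h4, pow_succ]; ring
  have hsum_all : ∀ (S : Finset ℕ), (∀ m ∈ S, 1 ≤ m) →
      (∑ m ∈ S, 2^(m-1)*(2^m - 1)) + (∑ m ∈ S, 2^(m-1)) = 2 * ∑ m ∈ S, 4^(m-1) := by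
    intro S hS
    rw [← Finset.sum_add_distrib, Finset.mul_sum]
    exact Finset.sum_congr rfl (fun m hm => hterm m (hS m hm))
  constructor
  · intro hz1
    have hke : k % 2 = 0 := by omega
    obtain ⟨a, hka⟩ : ∃ a, k = 2*a := ⟨k/2, by omega⟩
    have hy1 : ZProof.yk (2*a+1) = ZProof.yk (2*a) + 1 := by
      rw [ZProof.yk_two_mul_add_one, ZProof.yk_two_mul]
    have hqe : n + 2*a = 2 * ZProof.yk (2*a) := by
      rw [hka] at hk1 hq2
      rw [show 2*a+1 = 2*a+1 from rfl] at hq2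
      omega
    obtain ⟨S, hS2, hS2sum, hS4sum⟩ := ZProof.L1e a
    refine ⟨S, fun m hm => hS2 m hm, ?_⟩
    have hs := hsum_all S (fun m hm => by have := hS2 m hm; omega)
    omega
  · rintro ⟨S, hS1, hn⟩
    have hS1' : ∀ m ∈ S, 1 ≤ m := fun m hm => by have := hS1 m hm; omega
    have hy := ZProof.L2 (∑ m ∈ S, 2^(m-1)) S hS1' rfl
    have hs := hsum_all S hS1'
    have hkeven : (∑ m ∈ S, 2^(m-1)) % 2 = 0 := by
      have h2d : 2 ∣ ∑ m ∈ S, 2^(m-1) :=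
        Finset.dvd_sum (fun m hm => dvd_pow_self 2 (by have := hS1 m hm; omega))
      omega
    have hqe0 : n + (∑ m ∈ S, 2^(m-1)) = 2 * ZProof.yk (∑ m ∈ S, 2^(m-1)) := by omega
    have hk₀n : (∑ m ∈ S, 2^(m-1)) ≤ n := by
      have := ZProof.le_yk (∑ m ∈ S, 2^(m-1))
      omega
    have hle : (∑ m ∈ S, 2^(m-1)) ≤ k := Nat.le_findGreatest hk₀n
      (by show 2 * ZProof.yk (∑ m ∈ S, 2^(m-1)) ≤ n + (∑ m ∈ S, 2^(m-1)); omega)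
    have hge : k ≤ (∑ m ∈ S, 2^(m-1)) := by
      by_contra hgt
      push_neg at hgt
      have hgap := ZProof.yk_gap (k - (∑ m ∈ S, 2^(m-1))) (∑ m ∈ S, 2^(m-1))
      rw [show (∑ m ∈ S, 2^(m-1)) + (k - (∑ m ∈ S, 2^(m-1))) = k from by omega] at hgap
      omega
    rw [hzn]
    omega
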